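/- arXiv:2109.07057 — 2 statements merged into one kernel-verified Lean document; each statement's English description precedes it below -/
import Mathlib

section
/- Let A : [0,∞) → ℝ be continuous, C¹ on (0,∞), with A(0)=0, A(s)>0 for s>0, and suppose s·A'(s) ≥ α·A(s) for all s>0, where α ∈ (0,1]. Define 𝒜 : ℝⁿ → ℝⁿ by 𝒜(0)=0 and 𝒜(v) = (A(|v|)/|v|)·v for v ≠ 0. If in addition A(s) ≥ D₁·s^(p-1) for all s ≥ 0 with D₁ > 0 and p ≥ 2, then there exists a constant c₁ > 0 (depending on n, p, α, D₁) such that (𝒜(v₂) − 𝒜(v₁)) · (v₂ − v₁) ≥ c₁·|v₂ − v₁|^p for all v₁, v₂ ∈ ℝⁿ. -/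
open scoped RealInnerProductSpace

set_option maxHeartbeats 1000000

theorem stmt0 (n : ℕ) (p α D₁ : ℝ) (hp : 2 ≤ p) (hα0 : 0 < α) (hα1 : α ≤ 1)
    (hD₁ : 0 < D₁) (A : ℝ → ℝ)
    (hAcont : ContinuousOn A (Set.Ici 0))
    (hAC1 : ∀ s : ℝ, 0 < s → DifferentiableAt ℝ A s)
    (hA0 : A 0 = 0) (hApos : ∀ s : ℝ, 0 < s → 0 < A s)
    (hgrow : ∀ s : ℝ, 0 < s → α * A s ≤ s * deriv A s)
    (hlow : ∀ s : ℝ, 0 ≤ s → D₁ * s ^ (p - 1) ≤ A s)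
    (𝒜 : EuclideanSpace ℝ (Fin n) → EuclideanSpace ℝ (Fin n))
    (h𝒜0 : 𝒜 0 = 0)
    (h𝒜 : ∀ v : EuclideanSpace ℝ (Fin n), v ≠ 0 → 𝒜 v = (A ‖v‖ / ‖v‖) • v) :
    ∃ c₁ : ℝ, 0 < c₁ ∧ ∀ v₁ v₂ : EuclideanSpace ℝ (Fin n),
      c₁ * ‖v₂ - v₁‖ ^ p ≤ ⟪𝒜 v₂ - 𝒜 v₁, v₂ - v₁⟫ := by
  have hp0 : (0:ℝ) < p := by linarith
  -- A is monotone on [0, ∞)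
  have hAmono : MonotoneOn A (Set.Ici (0:ℝ)) := by
    apply monotoneOn_of_deriv_nonneg (convex_Ici 0) hAcont
    · rw [interior_Ici]
      exact fun s hs => (hAC1 s hs).differentiableWithinAt
    · rw [interior_Ici]
      intro s hs
      have hs0 : (0:ℝ) < s := hs
      have h1 := hgrow s hs0
      have h2 := hApos s hs0
      nlinarith
  set ε : ℝ := α * D₁ * (2:ℝ) ^ (-p) with hεdef
  have hε : 0 < ε := by
    have : (0:ℝ) < (2:ℝ) ^ (-p) := Real.rpow_pos_of_pos two_pos _
    positivity
  -- key growth estimate on A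
  have key : ∀ a b : ℝ, 0 ≤ a → a ≤ b → ε * (b ^ (p-2) * (b - a)) ≤ A b - A a := by
    intro a b ha0 hab
    rcases eq_or_lt_of_le hab with rfl | hab'
    · simp
    have hb0 : 0 < b := lt_of_le_of_lt ha0 hab'
    set c : ℝ := max a (b/2) with hcdef
    have hc0 : 0 < c := lt_of_lt_of_le (by linarith) (le_max_right a (b/2))
    have hcb : c ≤ b := max_le hab (by linarith)
    have hbc : (b - a)/2 ≤ b - c := by
      rcases le_total a (b/2) with h | h
      · rw [hcdef, max_eq_right h]; linarith
      · rw [hcdef, max_eq_left h]; linarith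
    set m : ℝ := α * (D₁ * (b/2) ^ (p-1)) / b with hmdef
    have hmv : m * (b - c) ≤ A b - A c := by
      apply (convex_Icc c b).mul_sub_le_image_sub_of_le_deriv
        (hAcont.mono (fun x hx => le_trans hc0.le hx.1))
        (by
          rw [interior_Icc]
          exact fun x hx => (hAC1 x (lt_trans hc0 hx.1)).differentiableWithinAt)
        (by
          rw [interior_Icc]
          intro x hx
          have hx0 : 0 < x := lt_trans hc0 hx.1
          have hxb : x ≤ b := le_of_lt hx.2
          have hxhalf : b/2 ≤ x := le_trans (le_max_right a (b/2)) (le_of_lt hx.1)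
          have hAx : D₁ * (b/2) ^ (p-1) ≤ A x := by
            refine le_trans ?_ (hlow x hx0.le)
            have : (b/2) ^ (p-1) ≤ x ^ (p-1) :=
              Real.rpow_le_rpow (by linarith) hxhalf (by linarith)
            nlinarith
          have h1 : α * A x / x ≤ deriv A x := by
            rw [div_le_iff₀ hx0]
            have := hgrow x hx0
            linarith
          refine le_trans ?_ h1
          rw [hmdef]
          apply div_le_div₀ (mul_pos hα0 (hApos x hx0)).le (by nlinarith) hx0 hxb)
        c (Set.left_mem_Icc.2 hcb) b (Set.right_mem_Icc.2 hcb) hcb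
    have hAc : A a ≤ A c := hAmono (Set.mem_Ici.2 ha0) (Set.mem_Ici.2 hc0.le)
      (le_max_left a (b/2))
    have hQ : (0:ℝ) < (2:ℝ) ^ (p-1) := Real.rpow_pos_of_pos two_pos _
    have hB : (0:ℝ) ≤ b ^ (p-2) := Real.rpow_nonneg hb0.le _
    have hbd : (b/2) ^ (p-1) = b ^ (p-2) * b / (2:ℝ) ^ (p-1) := by
      rw [Real.div_rpow hb0.le (by norm_num : (0:ℝ) ≤ 2)]
      congr 1
      rw [show p - 1 = (p-2) + 1 by ring, Real.rpow_add hb0, Real.rpow_one]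
    have h2p : (2:ℝ) ^ (-p) * (2:ℝ) ^ (p-1) = 1/2 := by
      rw [← Real.rpow_add two_pos, show -p + (p-1) = -1 by ring]
      rw [Real.rpow_neg_one]
      norm_num
    have hεm : ε * (b ^ (p-2) * (b - a)) ≤ m * (b - c) := by
      rw [hmdef, hbd, hεdef]
      have hm2 : α * (D₁ * (b ^ (p-2) * b / (2:ℝ)^(p-1))) / b * (b - c)
          = α * D₁ * b ^ (p-2) * (b - c) / (2:ℝ)^(p-1) := by
        field_simp
      rw [hm2, le_div_iff₀ hQ]
      have hXQ : α * D₁ * (2:ℝ)^(-p) * (b ^ (p-2) * (b - a)) * (2:ℝ)^(p-1)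
          = α * D₁ * b ^ (p-2) * ((b - a)/2) := by
        rw [show α * D₁ * (2:ℝ)^(-p) * (b ^ (p-2) * (b - a)) * (2:ℝ)^(p-1)
            = ((2:ℝ)^(-p) * (2:ℝ)^(p-1)) * (α * D₁ * (b ^ (p-2) * (b - a))) by ring, h2p]
        ring
      rw [hXQ]
      exact mul_le_mul_of_nonneg_left hbc (by positivity)
    linarith
  -- strong monotonicity with quadratic modulus
  have step : ∀ v₁ v₂ : EuclideanSpace ℝ (Fin n), ‖v₁‖ ≤ ‖v₂‖ →
      ε * ‖v₂‖ ^ (p-2) * ‖v₂ - v₁‖ ^ 2 ≤ ⟪𝒜 v₂ - 𝒜 v₁, v₂ - v₁⟫ := by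
    intro v₁ v₂ hle
    by_cases hv2 : v₂ = 0
    · have hv1 : v₁ = 0 := by
        rw [← norm_le_zero_iff]
        rw [hv2, norm_zero] at hle
        exact hle
      simp [hv1, hv2, h𝒜0]
    have hb0 : (0:ℝ) < ‖v₂‖ := norm_pos_iff.2 hv2
    have hεp : (0:ℝ) < ε * ‖v₂‖ ^ (p-2) := by positivity
    have hbpow : ‖v₂‖ ^ (p-1) * ‖v₂‖ = ‖v₂‖ ^ (p-2) * ‖v₂‖ ^ 2 := by
      rw [show p - 1 = (p-2) + 1 by ring, Real.rpow_add hb0, Real.rpow_one]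
      ring
    have hεD : ε ≤ D₁ := by
      have h1 : (2:ℝ) ^ (-p) ≤ 1 :=
        Real.rpow_le_one_of_one_le_of_nonpos one_le_two (by linarith)
      have h2 : (0:ℝ) < (2:ℝ) ^ (-p) := Real.rpow_pos_of_pos two_pos _
      rw [hεdef]
      nlinarith [mul_nonneg (mul_nonneg (sub_nonneg.2 hα1) hD₁.le) h2.le,
        mul_nonneg hD₁.le (sub_nonneg.2 h1)]
    have h2ε : 2 * ε ≤ D₁ := by
      have h1 : (2:ℝ) ^ (1-p) ≤ 1 :=
        Real.rpow_le_one_of_one_le_of_nonpos one_le_two (by linarith)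
      have h2 : (2:ℝ) * (2:ℝ) ^ (-p) = (2:ℝ) ^ (1-p) := by
        rw [show (1:ℝ) - p = 1 + -p by ring, Real.rpow_add two_pos, Real.rpow_one]
      have h3 : (0:ℝ) < (2:ℝ) ^ (-p) := Real.rpow_pos_of_pos two_pos _
      have h4 : 2 * (2:ℝ) ^ (-p) ≤ 1 := by rw [h2]; exact h1
      rw [hεdef]
      nlinarith [mul_nonneg (mul_nonneg (sub_nonneg.2 hα1) hD₁.le) h3.le,
        mul_nonneg hD₁.le (sub_nonneg.2 h4)]
    have hAb := hlow ‖v₂‖ hb0.le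
    by_cases hv1 : v₁ = 0
    · rw [hv1, h𝒜0, sub_zero, sub_zero, h𝒜 v₂ hv2, real_inner_smul_left,
        real_inner_self_eq_norm_sq]
      have h1 : A ‖v₂‖ / ‖v₂‖ * ‖v₂‖ ^ 2 = A ‖v₂‖ * ‖v₂‖ := by
        field_simp
      rw [h1]
      have hB : (0:ℝ) ≤ ‖v₂‖ ^ (p-2) := Real.rpow_nonneg hb0.le _
      nlinarith [mul_le_mul_of_nonneg_right hAb hb0.le,
        mul_le_mul_of_nonneg_right hεD (mul_nonneg hB (sq_nonneg ‖v₂‖)),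
        mul_le_mul_of_nonneg_left (le_of_eq hbpow) hD₁.le]
    have ha0 : (0:ℝ) < ‖v₁‖ := norm_pos_iff.2 hv1
    rw [h𝒜 v₂ hv2, h𝒜 v₁ hv1]
    have hc : ⟪v₂, v₁⟫ = ⟪v₁, v₂⟫ := real_inner_comm v₁ v₂
    have expand : ⟪(A ‖v₂‖ / ‖v₂‖) • v₂ - (A ‖v₁‖ / ‖v₁‖) • v₁, v₂ - v₁⟫
        = (A ‖v₂‖ / ‖v₂‖) * ‖v₂‖ ^ 2 + (A ‖v₁‖ / ‖v₁‖) * ‖v₁‖ ^ 2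
          - ((A ‖v₂‖ / ‖v₂‖) + (A ‖v₁‖ / ‖v₁‖)) * ⟪v₁, v₂⟫ := by
      simp only [inner_sub_left, inner_sub_right, real_inner_smul_left,
        real_inner_self_eq_norm_sq, hc]
      ring
    rw [expand]
    have hnorm : ‖v₂ - v₁‖ ^ 2 = ‖v₂‖ ^ 2 - 2 * ⟪v₁, v₂⟫ + ‖v₁‖ ^ 2 := by
      rw [norm_sub_sq_real, hc]
    rw [hnorm]
    set a := ‖v₁‖ with hadef
    set b := ‖v₂‖ with hbdef
    set t := (⟪v₁, v₂⟫ : ℝ) with htdef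
    set ga := A a / a with hgadef
    set gb := A b / b with hgbdef
    have ht : t ≤ a * b := by
      rw [htdef, hadef, hbdef]
      exact real_inner_le_norm v₁ v₂
    have hga : ga * a = A a := div_mul_cancel₀ _ ha0.ne'
    have hgb : gb * b = A b := div_mul_cancel₀ _ hb0.ne'
    have hgapos : 0 < ga := div_pos (hApos a ha0) ha0
    have hB : (0:ℝ) ≤ b ^ (p-2) := Real.rpow_nonneg hb0.le _
    have hgbbig : D₁ * b ^ (p-2) ≤ gb := by
      rw [hgbdef, le_div_iff₀ hb0]
      calc D₁ * b ^ (p-2) * b = D₁ * (b ^ (p-2) * b) := by ring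
        _ = D₁ * b ^ (p-1) := by
            rw [show p - 1 = (p-2) + 1 by ring, Real.rpow_add hb0, Real.rpow_one]
        _ ≤ A b := hAb
    have hcoef : 0 ≤ gb + ga - 2 * (ε * b ^ (p-2)) := by
      have := mul_le_mul_of_nonneg_right h2ε hB
      linarith [hgbbig, hgapos]
    have H1 : (gb + ga - 2 * (ε * b ^ (p-2))) * t
        ≤ (gb + ga - 2 * (ε * b ^ (p-2))) * (a * b) :=
      mul_le_mul_of_nonneg_left ht hcoef
    have hkey := key a b ha0.le hle
    have H2 : ε * b ^ (p-2) * (b - a) ^ 2 ≤ (b - a) * (A b - A a) := by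
      have := mul_le_mul_of_nonneg_right hkey (sub_nonneg.2 hle)
      linarith [this]
    have H3 : gb * b ^ 2 + ga * a ^ 2 - (gb + ga) * (a * b) = (b - a) * (A b - A a) := by
      rw [← hgb, ← hga]
      ring
    linarith [H1, H2, H3]
  -- conclude with the p-power modulus
  refine ⟨ε * (2:ℝ) ^ (2 - p), by positivity, ?_⟩
  have main : ∀ v₁ v₂ : EuclideanSpace ℝ (Fin n), ‖v₁‖ ≤ ‖v₂‖ →
      ε * (2:ℝ) ^ (2 - p) * ‖v₂ - v₁‖ ^ p ≤ ⟪𝒜 v₂ - 𝒜 v₁, v₂ - v₁⟫ := by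
    intro v₁ v₂ hle
    by_cases hd : v₂ - v₁ = 0
    · have hv : v₂ = v₁ := sub_eq_zero.1 hd
      rw [hd, hv, norm_zero, Real.zero_rpow hp0.ne', inner_zero_right, mul_zero]
    have hd0 : (0:ℝ) < ‖v₂ - v₁‖ := norm_pos_iff.2 hd
    have hb0 : (0:ℝ) < ‖v₂‖ := by
      by_contra h
      push_neg at h
      have h2 : ‖v₂‖ = 0 := le_antisymm h (norm_nonneg _)
      have h1 : ‖v₁‖ = 0 := le_antisymm (h2 ▸ hle) (norm_nonneg _)
      have : ‖v₂ - v₁‖ ≤ ‖v₂‖ + ‖v₁‖ := norm_sub_le _ _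
      rw [h1, h2] at this
      linarith
    have hdb : ‖v₂ - v₁‖ ≤ 2 * ‖v₂‖ := by
      have := norm_sub_le v₂ v₁
      linarith
    have hsplit : ‖v₂ - v₁‖ ^ p = ‖v₂ - v₁‖ ^ (p-2) * ‖v₂ - v₁‖ ^ 2 := by
      have h2 : ‖v₂ - v₁‖ ^ ((2:ℕ):ℝ) = ‖v₂ - v₁‖ ^ (2:ℕ) := Real.rpow_natCast ‖v₂ - v₁‖ 2
      have h1 : ‖v₂ - v₁‖ ^ (p-2) * ‖v₂ - v₁‖ ^ ((2:ℕ):ℝ) = ‖v₂ - v₁‖ ^ p := by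
        rw [← Real.rpow_add hd0]
        norm_num
      rw [← h1, h2]
    have hmono : ‖v₂ - v₁‖ ^ (p-2) ≤ (2:ℝ) ^ (p-2) * ‖v₂‖ ^ (p-2) := by
      rw [← Real.mul_rpow (by norm_num) hb0.le]
      exact Real.rpow_le_rpow hd0.le hdb (by linarith)
    have h2cancel : (2:ℝ) ^ (2-p) * (2:ℝ) ^ (p-2) = 1 := by
      rw [← Real.rpow_add two_pos, show (2-p) + (p-2) = 0 by ring, Real.rpow_zero]
    have hstep := step v₁ v₂ hle
    have hchain : ε * (2:ℝ) ^ (2-p) * ‖v₂ - v₁‖ ^ p ≤ ε * ‖v₂‖ ^ (p-2) * ‖v₂ - v₁‖ ^ 2 := by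
      rw [hsplit]
      have hsq : (0:ℝ) ≤ ‖v₂ - v₁‖ ^ 2 := sq_nonneg _
      have h2p2 : (0:ℝ) < (2:ℝ) ^ (2-p) := Real.rpow_pos_of_pos two_pos _
      have := mul_le_mul_of_nonneg_right hmono hsq
      calc ε * (2:ℝ) ^ (2-p) * (‖v₂ - v₁‖ ^ (p-2) * ‖v₂ - v₁‖ ^ 2)
          ≤ ε * (2:ℝ) ^ (2-p) * ((2:ℝ) ^ (p-2) * ‖v₂‖ ^ (p-2) * ‖v₂ - v₁‖ ^ 2) := by
            apply mul_le_mul_of_nonneg_left _ (by positivity)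
            exact this
        _ = ((2:ℝ) ^ (2-p) * (2:ℝ) ^ (p-2)) * (ε * ‖v₂‖ ^ (p-2) * ‖v₂ - v₁‖ ^ 2) := by ring
        _ = ε * ‖v₂‖ ^ (p-2) * ‖v₂ - v₁‖ ^ 2 := by rw [h2cancel]; ring
    linarith
  intro v₁ v₂
  rcases le_total ‖v₁‖ ‖v₂‖ with h | h
  · exact main v₁ v₂ h
  · have := main v₂ v₁ h
    rw [norm_sub_rev] at this
    have hswap : ⟪𝒜 v₁ - 𝒜 v₂, v₁ - v₂⟫ = ⟪𝒜 v₂ - 𝒜 v₁, v₂ - v₁⟫ := by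
      rw [show 𝒜 v₁ - 𝒜 v₂ = -(𝒜 v₂ - 𝒜 v₁) by abel, show v₁ - v₂ = -(v₂ - v₁) by abel,
        inner_neg_neg]
    rw [hswap] at this
    exact this
end

section
/- Let u, v : ℝⁿ \ K → ℝ be continuous, where K is compact, and suppose u satisfies the maximum principle on bounded open subsets of ℝⁿ \ K (i.e. sup over any bounded open set with closure in the domain is attained on its boundary). Suppose there is a sequence R_k → ∞ and a constant C with sup_{R_k ≤ |x| ≤ R_k²} |u(x)|^p · Q_k ≤ C where Q_k → +∞. Then sup_{|x| = R_k} |u| → 0, and consequently u is bounded on ℝⁿ \ K with |u| ≤ max{ sup_k sup_{|x|=R_k} |u|, max_{∂K} |u| }. -/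
open Filter

theorem stmt12 (n : ℕ) (p : ℝ) (hp : 1 < p)
    (K : Set (EuclideanSpace ℝ (Fin n))) (hK : IsCompact K)
    (u v : EuclideanSpace ℝ (Fin n) → ℝ)
    (hu : ContinuousOn u (closure Kᶜ)) (hv : ContinuousOn v (closure Kᶜ))
    (hmax : ∀ U : Set (EuclideanSpace ℝ (Fin n)), IsOpen U →
      Bornology.IsBounded U → U ⊆ Kᶜ →
      ∀ x ∈ U, |u x| ≤ sSup ((fun y => |u y|) '' frontier U))
    (R : ℕ → ℝ) (hR : Tendsto R atTop atTop)
    (Q : ℕ → ℝ) (hQ : Tendsto Q atTop atTop)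
    (C : ℝ)
    (hbd : ∀ k, (sSup ((fun x => |u x|) ''
        {x : EuclideanSpace ℝ (Fin n) | R k ≤ ‖x‖ ∧ ‖x‖ ≤ (R k) ^ 2})) ^ p * Q k ≤ C) :
    Tendsto (fun k => sSup ((fun x => |u x|) ''
        Metric.sphere (0 : EuclideanSpace ℝ (Fin n)) (R k))) atTop (nhds 0) ∧
    ∀ x ∉ K, |u x| ≤ max
      (⨆ k, sSup ((fun x => |u x|) '' Metric.sphere (0 : EuclideanSpace ℝ (Fin n)) (R k)))
      (sSup ((fun y => |u y|) '' frontier K)) := by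
  classical
  set f : EuclideanSpace ℝ (Fin n) → ℝ := fun x => |u x| with hf
  set S : ℕ → ℝ := fun k => sSup (f '' {x : EuclideanSpace ℝ (Fin n) | R k ≤ ‖x‖ ∧ ‖x‖ ≤ (R k) ^ 2}) with hS
  set T : ℕ → ℝ := fun k => sSup (f '' Metric.sphere (0 : EuclideanSpace ℝ (Fin n)) (R k)) with hT
  obtain ⟨r0, hr0⟩ := hK.isBounded.subset_closedBall 0
  have hr0' : ∀ y : EuclideanSpace ℝ (Fin n), r0 < ‖y‖ → y ∈ Kᶜ := by
    intro y hy hyK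
    exact absurd (mem_closedBall_zero_iff.1 (hr0 hyK)) (not_le.2 hy)
  have hp0 : 0 < p := lt_trans zero_lt_one hp
  have hfnn : ∀ (s : Set (EuclideanSpace ℝ (Fin n))), ∀ a ∈ f '' s, 0 ≤ a := by
    rintro s a ⟨y, -, rfl⟩; exact abs_nonneg _
  have hS0 : ∀ k, 0 ≤ S k := fun k => Real.sSup_nonneg (hfnn _)
  have hT0 : ∀ k, 0 ≤ T k := fun k => Real.sSup_nonneg (hfnn _)
  -- continuity of f on subsets of Kᶜ
  have hfc : ∀ s : Set (EuclideanSpace ℝ (Fin n)), s ⊆ Kᶜ → ContinuousOn f s := by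
    intro s hs
    exact (hu.mono (hs.trans subset_closure)).abs
  -- S tends to 0
  have hSlim : Tendsto S atTop (nhds 0) := by
    rw [Metric.tendsto_atTop]
    intro ε hε
    have hεp : 0 < ε ^ p := Real.rpow_pos_of_pos hε p
    obtain ⟨N, hN⟩ := eventually_atTop.1 (hQ.eventually_ge_atTop (max C 0 / ε ^ p + 1))
    refine ⟨N, fun k hk => ?_⟩
    have hQk := hN k hk
    have hQpos : 0 < Q k := lt_of_lt_of_le (by positivity) hQk
    have h1 : S k ^ p ≤ max C 0 / Q k := by
      rw [le_div_iff₀ hQpos]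
      exact (hbd k).trans (le_max_left _ _)
    have h2 : max C 0 / Q k < ε ^ p := by
      rw [div_lt_iff₀ hQpos]
      have : max C 0 / ε ^ p < Q k := by linarith
      calc max C 0 = (max C 0 / ε ^ p) * ε ^ p := by field_simp
        _ < Q k * ε ^ p := by exact mul_lt_mul_of_pos_right this hεp
        _ = ε ^ p * Q k := mul_comm _ _
    have hlt : S k < ε := by
      by_contra h
      push_neg at h
      have := Real.rpow_le_rpow hε.le h hp0.le
      linarith [h1.trans_lt h2]
    simpa [Real.dist_eq, abs_of_nonneg (hS0 k)] using hlt
  -- eventually T k ≤ S k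
  have hTS : ∀ᶠ k in atTop, T k ≤ S k := by
    filter_upwards [hR.eventually_ge_atTop (max r0 1 + 1)] with k hRk
    have hR1 : (1 : ℝ) ≤ R k := by
      have := le_max_right r0 1; linarith
    have hRr0 : r0 < R k := by
      have := le_max_left r0 1; linarith
    have hsub : Metric.sphere (0 : EuclideanSpace ℝ (Fin n)) (R k) ⊆ {x : EuclideanSpace ℝ (Fin n) | R k ≤ ‖x‖ ∧ ‖x‖ ≤ (R k) ^ 2} := by
      intro y hy
      have hy' : ‖y‖ = R k := by simpa using hy
      refine ⟨le_of_eq hy'.symm, ?_⟩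
      rw [hy']
      nlinarith
    have hsubK : {x : EuclideanSpace ℝ (Fin n) | R k ≤ ‖x‖ ∧ ‖x‖ ≤ (R k) ^ 2} ⊆ Kᶜ := by
      intro y hy
      exact hr0' y (lt_of_lt_of_le hRr0 hy.1)
    have hcomp : IsCompact {x : EuclideanSpace ℝ (Fin n) | R k ≤ ‖x‖ ∧ ‖x‖ ≤ (R k) ^ 2} := by
      have hcl : IsClosed {x : EuclideanSpace ℝ (Fin n) | R k ≤ ‖x‖ ∧ ‖x‖ ≤ (R k) ^ 2} := by
        exact (isClosed_le continuous_const continuous_norm).inter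
          (isClosed_le continuous_norm continuous_const)
      have hbdd : Bornology.IsBounded {x : EuclideanSpace ℝ (Fin n) | R k ≤ ‖x‖ ∧ ‖x‖ ≤ (R k) ^ 2} := by
        apply Bornology.IsBounded.subset (Metric.isBounded_closedBall (x := (0 : EuclideanSpace ℝ (Fin n))) (r := (R k)^2))
        intro y hy
        exact mem_closedBall_zero_iff.2 hy.2
      exact Metric.isCompact_of_isClosed_isBounded hcl hbdd
    have hbdd : BddAbove (f '' {x : EuclideanSpace ℝ (Fin n) | R k ≤ ‖x‖ ∧ ‖x‖ ≤ (R k) ^ 2}) :=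
      (hcomp.image_of_continuousOn (hfc _ hsubK)).bddAbove
    refine Real.sSup_le ?_ (hS0 k)
    rintro a ⟨y, hy, rfl⟩
    exact le_csSup hbdd ⟨y, hsub hy, rfl⟩
  have hTlim : Tendsto T atTop (nhds 0) :=
    squeeze_zero' (Filter.Eventually.of_forall hT0) hTS hSlim
  refine ⟨hTlim, ?_⟩
  -- Part 2
  have hTbdd : BddAbove (Set.range T) := hTlim.bddAbove_range
  have hiSup0 : 0 ≤ ⨆ k, T k := Real.iSup_nonneg hT0
  -- frontier K facts
  have hfrK : frontier K ⊆ closure Kᶜ := by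
    rw [← frontier_compl]
    exact frontier_subset_closure
  have hfrKc : IsCompact (frontier K) := by
    refine hK.of_isClosed_subset isClosed_frontier ?_
    exact frontier_subset_closure.trans hK.isClosed.closure_eq.subset
  have hfrKbdd : BddAbove (f '' frontier K) := by
    refine (hfrKc.image_of_continuousOn ?_).bddAbove
    exact (hu.mono hfrK).abs
  intro x hx
  obtain ⟨k, hk⟩ := (hR.eventually_ge_atTop (max (max r0 1) ‖x‖ + 1)).exists
  have hRr0 : r0 < R k := by
    have h1 := le_max_left r0 1
    have h2 := le_max_left (max r0 1) ‖x‖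
    linarith
  have hRx : ‖x‖ < R k := by
    have := le_max_right (max r0 1) ‖x‖
    linarith
  have hRpos : 0 < R k := by
    have h1 := le_max_right r0 1
    have h2 := le_max_left (max r0 1) ‖x‖
    linarith
  set U : Set (EuclideanSpace ℝ (Fin n)) := Metric.ball (0 : EuclideanSpace ℝ (Fin n)) (R k) ∩ Kᶜ with hU
  have hUopen : IsOpen U := Metric.isOpen_ball.inter hK.isClosed.isOpen_compl
  have hUbdd : Bornology.IsBounded U :=
    (Metric.isBounded_ball (x := (0 : EuclideanSpace ℝ (Fin n))) (r := R k)).subset Set.inter_subset_left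
  have hUK : U ⊆ Kᶜ := Set.inter_subset_right
  have hxU : x ∈ U := ⟨mem_ball_zero_iff.2 hRx, hx⟩
  have key := hmax U hUopen hUbdd hUK x hxU
  refine key.trans ?_
  refine Real.sSup_le ?_ (le_max_of_le_left hiSup0)
  rintro a ⟨y, hy, rfl⟩
  have hy' := frontier_inter_subset (Metric.ball (0 : EuclideanSpace ℝ (Fin n)) (R k)) Kᶜ hy
  rcases hy' with ⟨hy1, -⟩ | ⟨-, hy2⟩
  · -- y on the sphere
    rw [frontier_ball (0 : EuclideanSpace ℝ (Fin n)) (ne_of_gt hRpos)] at hy1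
    have hyK : Metric.sphere (0 : EuclideanSpace ℝ (Fin n)) (R k) ⊆ Kᶜ := by
      intro z hz
      have : ‖z‖ = R k := by simpa using hz
      exact hr0' z (by rw [this]; exact hRr0)
    have hsphbdd : BddAbove (f '' Metric.sphere (0 : EuclideanSpace ℝ (Fin n)) (R k)) :=
      ((isCompact_sphere (0 : EuclideanSpace ℝ (Fin n)) (R k)).image_of_continuousOn (hfc _ hyK)).bddAbove
    have h1 : |u y| ≤ T k := le_csSup hsphbdd ⟨y, hy1, rfl⟩
    have h2 : T k ≤ ⨆ k, T k := le_ciSup hTbdd k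
    exact le_max_of_le_left (h1.trans h2)
  · -- y on frontier K
    rw [frontier_compl] at hy2
    exact le_max_of_le_right (le_csSup hfrKbdd ⟨y, hy2, rfl⟩)
end
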